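/- Let β, σ, γ, κ > 0, δ > 0 and q ∈ [0,1], and let J^e be the 3×3 real matrix with rows (qβ−κ−σ, qβ, 0), ((1−q)β+σ, (1−q)β−γ, 0), (κ, γ, −δ). Then every complex eigenvalue of J^e has strictly negative real part if and only if R₀ := max( β/(κ+γ+σ), β(qγ+(1−q)κ+σ)/(γ(κ+σ)) ) < 1. -/

import Mathlib

lemma quad_roots_neg_iff (b c : ℝ) :
    (∀ μ : ℂ, μ^2 + (b:ℂ)*μ + (c:ℂ) = 0 → μ.re < 0) ↔ 0 < b ∧ 0 < c := by
  constructor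
  · intro h
    by_contra hbc
    push_neg at hbc
    -- produce a root with nonneg real part
    have key : ∃ μ : ℂ, μ^2 + (b:ℂ)*μ + (c:ℂ) = 0 ∧ 0 ≤ μ.re := by
      by_cases hd : 0 ≤ b^2 - 4*c
      · set s := Real.sqrt (b^2 - 4*c) with hsdef
        have hs : s^2 = b^2 - 4*c := Real.sq_sqrt hd
        refine ⟨(((-b + s)/2 : ℝ) : ℂ), ?_, ?_⟩
        · have : ((-b + s)/2)^2 + b*((-b + s)/2) + c = 0 := by nlinarith [hs]
          push_cast
          have h2 := congrArg Complex.ofReal this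
          simp only [Complex.ofReal_add, Complex.ofReal_neg, Complex.ofReal_div, Complex.ofReal_ofNat, Complex.ofReal_pow, Complex.ofReal_mul, Complex.ofReal_zero] at h2 ⊢
          linear_combination h2
        · simp only [Complex.ofReal_re]
          have hs0 : 0 ≤ s := Real.sqrt_nonneg _
          rcases le_or_gt c 0 with hc | hc
          · have : b ≤ s := by
              nlinarith [abs_nonneg b, sq_abs b, Real.sqrt_le_sqrt (show b^2 ≤ b^2 - 4*c by linarith), Real.sqrt_sq_eq_abs b, le_abs_self b]
            linarith
          · have hb : b ≤ 0 := by
              by_contra h'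
              push_neg at h'
              exact absurd (hbc h') (not_le.mpr hc)
            linarith
      · push_neg at hd
        have hcc : 0 ≤ c - b^2/4 := by nlinarith
        set t := Real.sqrt (c - b^2/4) with htdef
        have ht : t^2 = c - b^2/4 := Real.sq_sqrt hcc
        have hb : b ≤ 0 := by
          by_contra hb'
          push_neg at hb'
          have := hbc hb'
          nlinarith
        refine ⟨(((-b/2 : ℝ)) : ℂ) + t * Complex.I, ?_, ?_⟩
        · have ht' : ((t:ℂ))^2 = (c:ℂ) - (b:ℂ)^2/4 := by exact_mod_cast congrArg Complex.ofReal ht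
          push_cast
          linear_combination ((t:ℂ))^2 * Complex.I_sq - ht'
        · simp [Complex.add_re]
          linarith
    obtain ⟨μ, hμ, hre⟩ := key
    exact absurd (h μ hμ) (not_lt.mpr hre)
  · rintro ⟨hb, hc⟩ μ hμ
    set x := μ.re
    set y := μ.im
    have hre : x^2 - y^2 + b*x + c = 0 := by
      have := congrArg Complex.re hμ
      simpa [Complex.add_re, Complex.mul_re, Complex.ofReal_re, Complex.ofReal_im, pow_two, x, y] using this
    have him : y * (2*x + b) = 0 := by
      have := congrArg Complex.im hμ
      simp [Complex.add_im, Complex.mul_im, Complex.ofReal_re, Complex.ofReal_im, pow_two, x, y] at this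
      linarith
    rcases mul_eq_zero.mp him with hy | hx
    · subst_eqs
      rw [hy] at hre
      by_contra hx0
      push_neg at hx0
      nlinarith
    · have : x = -b/2 := by linarith
      rw [this]; linarith



theorem sairs_dfe_stability_iff_R0
    (β σ γ κ δ q : ℝ)
    (hβ : 0 < β) (hσ : 0 < σ) (hγ : 0 < γ) (hκ : 0 < κ) (hδ : 0 < δ)
    (hq : q ∈ Set.Icc (0 : ℝ) 1) :
    (∀ μ ∈ spectrum ℂ
        ((!![q * β - κ - σ, q * β, 0;
             (1 - q) * β + σ, (1 - q) * β - γ, 0;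
             κ, γ, -δ] : Matrix (Fin 3) (Fin 3) ℝ).map (Complex.ofReal)),
      μ.re < 0) ↔
    max (β / (κ + γ + σ)) (β * (q * γ + (1 - q) * κ + σ) / (γ * (κ + σ))) < 1 := by
  set b : ℝ := κ + σ + γ - β with hbdef
  set c : ℝ := γ*(κ+σ) - β*(q*γ+(1-q)*κ+σ) with hcdef
  set M := (!![q * β - κ - σ, q * β, 0;
             (1 - q) * β + σ, (1 - q) * β - γ, 0;
             κ, γ, -δ] : Matrix (Fin 3) (Fin 3) ℝ).map (Complex.ofReal) with hM
  have hspec : ∀ μ : ℂ, μ ∈ spectrum ℂ M ↔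
      (μ = -(δ:ℂ) ∨ μ^2 + (b:ℂ)*μ + (c:ℂ) = 0) := by
    intro μ
    rw [spectrum.mem_iff, Matrix.isUnit_iff_isUnit_det, isUnit_iff_ne_zero, not_not]
    have hdet : (algebraMap ℂ (Matrix (Fin 3) (Fin 3) ℂ) μ - M).det
        = (μ + δ) * (μ^2 + (b:ℂ)*μ + (c:ℂ)) := by
      rw [hM, Matrix.det_fin_three]
      simp [Matrix.algebraMap_matrix_apply]
      push_cast [hbdef, hcdef]
      ring
    rw [hdet, mul_eq_zero]
    constructor
    · rintro (h | h)
      · left; linear_combination h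
      · right; exact h
    · rintro (h | h)
      · left; rw [h]; ring
      · right; exact h
  have step1 : (∀ μ ∈ spectrum ℂ M, μ.re < 0) ↔
      (∀ μ : ℂ, μ^2 + (b:ℂ)*μ + (c:ℂ) = 0 → μ.re < 0) := by
    constructor
    · intro h μ hμ
      exact h μ ((hspec μ).mpr (Or.inr hμ))
    · intro h μ hμ
      rcases (hspec μ).mp hμ with h' | h'
      · rw [h']; simp; linarith
      · exact h μ h'
  rw [step1, quad_roots_neg_iff]
  have hd1 : 0 < κ + γ + σ := by linarith
  have hd2 : 0 < γ * (κ + σ) := by positivity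
  rw [max_lt_iff, div_lt_one hd1, div_lt_one hd2]
  constructor
  · rintro ⟨h1, h2⟩
    exact ⟨by linarith, by linarith⟩
  · rintro ⟨h1, h2⟩
    exact ⟨by linarith, by linarith⟩
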